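/- Proposition 3.8 (independence of global facts from certificates): Let Γ be any c-satisfiable boolean combination of formulas of the form k cert φ, and let Δ be any boolean combination of formulas of the form p ▷ q where neither p nor q contains a local name. Then Γ → Δ is c-valid if and only if Δ is c-valid. -/
import Mathlib


/-- Principal expressions over keys `K`, global names `G`, local names `N`. -/
inductive PExp (K G N : Type*) where
  | key : K → PExp K G N
  | glob : G → PExp K G N
  | loc : N → PExp K G N
  | s : PExp K G N → PExp K G N → PExp K G N

/-- Formulas of LLNC. -/
inductive Fml (K G N : Type*) where
  | bdto : PExp K G N → PExp K G N → Fml K G N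
  | cert : K → Fml K G N → Fml K G N
  | not : Fml K G N → Fml K G N
  | and : Fml K G N → Fml K G N → Fml K G N

/-- A world: an interpretation of global names and an assignment of
certificates to keys, with only finitely many certificates issued. -/
structure World (K G N : Type*) where
  beta : G → Set K
  certs : K → Set (Fml K G N)
  finite_certs : (⋃ k, certs k).Finite

variable {K G N : Type*}

/-- The interpretation of a principal expression relative to a world, a
local name assignment, and a key. -/
def interp (w : World K G N) (l : K → N → Set K) : PExp K G N → K → Set K
  | .key k', _ => {k'}
  | .glob g, _ => w.beta g
  | .loc n, k => l k n
  | .s p q, k => ⋃ k' ∈ interp w l p k, interp w l q k'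

/-- Satisfaction of a formula at a world, local name assignment, and key. -/
def Sat (w : World K G N) (l : K → N → Set K) (k : K) : Fml K G N → Prop
  | .bdto p q => interp w l q k ⊆ interp w l p k
  | .cert k' φ => φ ∈ w.certs k'
  | .not φ => ¬ Sat w l k φ
  | .and φ ψ => Sat w l k φ ∧ Sat w l k ψ

/-- A local name assignment is consistent with a world if every issued
binding certificate holds at the issuer. -/
def Consistent (w : World K G N) (l : K → N → Set K) : Prop :=
  ∀ (k : K) (n : N) (p : PExp K G N),
    Fml.bdto (.loc n) p ∈ w.certs k → Sat w l k (.bdto (.loc n) p)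

/-- `lw` is the (unique) minimal local name assignment consistent with `w`. -/
def IsMinConsistent (w : World K G N) (lw : K → N → Set K) : Prop :=
  Consistent w lw ∧ ∀ l, Consistent w l → ∀ (k : K) (n : N), lw k n ⊆ l k n

/-- Open-semantics satisfaction: satisfaction with a consistent assignment. -/
def OSat (w : World K G N) (l : K → N → Set K) (k : K) (φ : Fml K G N) : Prop :=
  Sat w l k φ ∧ Consistent w l

/-- `φ` is o-satisfiable. -/
def OSatisfiable (φ : Fml K G N) : Prop :=
  ∃ (w : World K G N) (l : K → N → Set K) (k : K), OSat w l k φ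

/-- `φ` is o-valid: no triple satisfies `¬φ` under the open semantics. -/
def OValid (φ : Fml K G N) : Prop :=
  ¬ ∃ (w : World K G N) (l : K → N → Set K) (k : K), OSat w l k (.not φ)

/-- `φ` is c-satisfiable: some world and key satisfy it under the minimal
consistent local name assignment of the world. -/
def CSatisfiable (φ : Fml K G N) : Prop :=
  ∃ (w : World K G N) (k : K) (lw : K → N → Set K), IsMinConsistent w lw ∧ Sat w lw k φ

/-- `φ` is c-valid: every world and key satisfy it under the minimal
consistent local name assignment of the world. -/
def CValid (φ : Fml K G N) : Prop :=
  ∀ (w : World K G N) (k : K) (lw : K → N → Set K), IsMinConsistent w lw → Sat w lw k φ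

/-- Material implication, as a classical abbreviation. -/
def Fml.imp (φ ψ : Fml K G N) : Fml K G N := .not (.and φ (.not ψ))

/-- Boolean combinations (via `¬` and `∧`) of formulas satisfying `A`. -/
inductive BoolComb (A : Fml K G N → Prop) : Fml K G N → Prop
  | base {φ : Fml K G N} : A φ → BoolComb A φ
  | not {φ : Fml K G N} : BoolComb A φ → BoolComb A (.not φ)
  | and {φ ψ : Fml K G N} : BoolComb A φ → BoolComb A ψ → BoolComb A (.and φ ψ)

/-- A formula of the form `k cert φ`. -/
def IsCertFml : Fml K G N → Prop
  | .cert _ _ => True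
  | _ => False

/-- A principal expression containing no local names. -/
def PExp.NoLocal : PExp K G N → Prop
  | .key _ => True
  | .glob _ => True
  | .loc _ => False
  | .s p q => p.NoLocal ∧ q.NoLocal

/-- A formula `p ▷ q` where neither `p` nor `q` contains a local name. -/
def IsGlobalBdto : Fml K G N → Prop
  | .bdto p q => p.NoLocal ∧ q.NoLocal
  | _ => False

lemma interp_mono (w : World K G N) {l l' : K → N → Set K}
    (h : ∀ k n, l k n ⊆ l' k n) (p : PExp K G N) (k : K) :
    interp w l p k ⊆ interp w l' p k := by
  induction p generalizing k with
  | key k' => simp [interp]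
  | glob g => simp [interp]
  | loc n => exact h k _
  | s p q ihp ihq =>
    intro x hx
    simp only [interp, Set.mem_iUnion] at hx ⊢
    obtain ⟨k', hk', hx⟩ := hx
    exact ⟨k', ihp k hk', ihq k' hx⟩

lemma exists_minConsistent (w : World K G N) :
    ∃ lw : K → N → Set K, IsMinConsistent w lw := by
  refine ⟨fun k n => ⋂ l ∈ {l | Consistent w l}, l k n, ?_, ?_⟩
  · intro k n p hp x hx
    show x ∈ ⋂ l ∈ {l | Consistent w l}, l k n
    refine Set.mem_iInter₂.mpr fun l hl => ?_
    have hmono : ∀ k n, (⋂ l ∈ {l | Consistent w l}, l k n) ⊆ l k n := by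
      intro k n y hy
      exact Set.mem_iInter₂.mp hy l hl
    exact hl k n p hp (interp_mono w hmono p k hx)
  · intro l hl k n x hx
    exact Set.mem_iInter₂.mp hx l hl

lemma sat_cert_iff {Γ : Fml K G N} (hΓ : BoolComb IsCertFml Γ)
    {w w' : World K G N} (hc : w.certs = w'.certs)
    (l l' : K → N → Set K) (k k' : K) :
    Sat w l k Γ ↔ Sat w' l' k' Γ := by
  induction hΓ with
  | @base φ hφ =>
    cases φ with
    | cert k0 ψ => simp [Sat, hc]
    | bdto p q => exact absurd hφ (by simp [IsCertFml])
    | not ψ => exact absurd hφ (by simp [IsCertFml])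
    | and ψ χ => exact absurd hφ (by simp [IsCertFml])
  | not _ ih => simp [Sat, ih]
  | and _ _ ih1 ih2 => simp [Sat, ih1, ih2]

lemma interp_noLocal {p : PExp K G N} (hp : p.NoLocal)
    {w w' : World K G N} (hb : w.beta = w'.beta)
    (l l' : K → N → Set K) (k k' : K) :
    interp w l p k = interp w' l' p k' := by
  induction p generalizing k k' with
  | key k0 => simp [interp]
  | glob g => simp [interp, hb]
  | loc n => exact absurd hp (by simp [PExp.NoLocal])
  | s p q ihp ihq =>
    obtain ⟨h1, h2⟩ := hp
    simp only [interp]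
    ext x
    simp only [Set.mem_iUnion]
    constructor
    · rintro ⟨a, ha, hx⟩
      rw [ihp h1 k k'] at ha
      rw [ihq h2 a a] at hx
      exact ⟨a, ha, hx⟩
    · rintro ⟨a, ha, hx⟩
      rw [← ihp h1 k k'] at ha
      rw [← ihq h2 a a] at hx
      exact ⟨a, ha, hx⟩

lemma sat_globalBdto_iff {Δ : Fml K G N} (hΔ : BoolComb IsGlobalBdto Δ)
    {w w' : World K G N} (hb : w.beta = w'.beta)
    (l l' : K → N → Set K) (k k' : K) :
    Sat w l k Δ ↔ Sat w' l' k' Δ := by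
  induction hΔ with
  | @base φ hφ =>
    cases φ with
    | bdto p q =>
      obtain ⟨hp, hq⟩ := hφ
      simp only [Sat]
      rw [interp_noLocal hp hb l l' k k', interp_noLocal hq hb l l' k k']
    | cert k0 ψ => exact absurd hφ (by simp [IsGlobalBdto])
    | not ψ => exact absurd hφ (by simp [IsGlobalBdto])
    | and ψ χ => exact absurd hφ (by simp [IsGlobalBdto])
  | not _ ih => simp [Sat, ih]
  | and _ _ ih1 ih2 => simp [Sat, ih1, ih2]

/-- Proposition 3.8: facts about global names are independent of
certificates: for c-satisfiable boolean combinations `Γ` of `cert`-formulas and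
boolean combinations `Δ` of local-name-free `▷`-formulas, `Γ → Δ` is c-valid
iff `Δ` is. -/
theorem global_facts_independent [Nonempty K] (Γ Δ : Fml K G N)
    (hΓ : BoolComb IsCertFml Γ) (hΓsat : CSatisfiable Γ)
    (hΔ : BoolComb IsGlobalBdto Δ) :
    CValid (Γ.imp Δ) ↔ CValid Δ := by
  constructor
  · intro h w k lw hlw
    obtain ⟨w', k', lw', hlw', hΓ'⟩ := hΓsat
    -- mixed world: beta from w, certs from w'
    let w'' : World K G N :=
      { beta := w.beta, certs := w'.certs, finite_certs := w'.finite_certs }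
    obtain ⟨l'', hl''⟩ := exists_minConsistent w''
    have himp := h w'' k l'' hl''
    simp only [Fml.imp, Sat, not_and, not_not] at himp
    have hΓ'' : Sat w'' l'' k Γ :=
      (sat_cert_iff hΓ (w := w') (w' := w'') rfl lw' l'' k' k).mp hΓ'
    have hΔ'' := himp hΓ''
    exact (sat_globalBdto_iff hΔ (w := w'') (w' := w) rfl l'' lw k k).mp hΔ''
  · intro h w k lw hlw
    have := h w k lw hlw
    simp only [Fml.imp, Sat, not_and, not_not]
    intro _
    exact this
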